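/- (The new analytical bound is at least as good as the KAT bound) Let N ≥ 2 and let α_1,…,α_N, γ_1,…,γ_N be real numbers with α_i > 0 and α_i ≤ γ_i ≤ N·α_i for all i. Let δ = max(0, max_i (γ_i − (N−1)α_i)), and assume δ < α_i and δ ≤ (γ_i − α_i)/(N−1) for all i. Set α_i' = α_i − δ and γ_i' = γ_i − N·δ. Then δ + Σ_{i=1}^N [1/χ(γ_i'/α_i') − (γ_i'/α_i' − χ(γ_i'/α_i'))/((1+χ(γ_i'/α_i'))·χ(γ_i'/α_i'))]·α_i' ≥ Σ_{i=1}^N [1/⌊γ_i/α_i⌋ − (γ_i/α_i − ⌊γ_i/α_i⌋)/((1+⌊γ_i/α_i⌋)⌊γ_i/α_i⌋)]·α_i. -/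
import Mathlib

open Classical in
/-- `χ(x) = x − 1` if `x` is an integer with `x ≥ 2`, and `χ(x) = ⌊x⌋` otherwise. -/
noncomputable def chi (x : ℝ) : ℝ :=
  if (∃ n : ℤ, x = (n : ℝ)) ∧ 2 ≤ x then x - 1 else (⌊x⌋ : ℝ)

lemma consec_nonneg (a : ℤ) : 0 ≤ a * (a - 1) := by
  rcases le_or_gt 1 a with h | h
  · nlinarith
  · nlinarith

lemma chi_term_eq (x : ℝ) (hx : 1 ≤ ⌊x⌋) :
    1 / chi x - (x - chi x) / ((1 + chi x) * chi x)
      = 1 / (⌊x⌋ : ℝ) - (x - (⌊x⌋ : ℝ)) / ((1 + (⌊x⌋ : ℝ)) * (⌊x⌋ : ℝ)) := by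
  unfold chi
  split_ifs with h
  · obtain ⟨⟨n, rfl⟩, h2⟩ := h
    have hn : (2:ℤ) ≤ n := by exact_mod_cast h2
    rw [Int.floor_intCast]
    have h0 : (n:ℝ) ≠ 0 := by
      have : (2:ℝ) ≤ (n:ℝ) := by exact_mod_cast hn
      linarith
    have h1 : (n:ℝ) - 1 ≠ 0 := by
      have : (2:ℝ) ≤ (n:ℝ) := by exact_mod_cast hn
      intro hc; linarith [sub_eq_zero.mp hc]
    have h1' : 1 + ((n:ℝ) - 1) ≠ 0 := by
      have : (2:ℝ) ≤ (n:ℝ) := by exact_mod_cast hn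
      intro hc; linarith
    field_simp
    ring
  · rfl

lemma subtangent (x : ℝ) (k : ℤ) (hk : 1 ≤ k) (hm : 1 ≤ ⌊x⌋) :
    1 / (k:ℝ) - (x - (k:ℝ)) / ((1 + (k:ℝ)) * (k:ℝ))
      ≤ 1 / (⌊x⌋ : ℝ) - (x - (⌊x⌋ : ℝ)) / ((1 + (⌊x⌋ : ℝ)) * (⌊x⌋ : ℝ)) := by
  set m : ℤ := ⌊x⌋ with hmdef
  have hmx : (m:ℝ) ≤ x := Int.floor_le x
  have hxm : x < (m:ℝ) + 1 := Int.lt_floor_add_one x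
  have hm1 : (1:ℝ) ≤ (m:ℝ) := by exact_mod_cast hm
  have hk1 : (1:ℝ) ≤ (k:ℝ) := by exact_mod_cast hk
  have hcc : (0:ℝ) ≤ ((k:ℝ) - (m:ℝ)) * ((k:ℝ) - (m:ℝ) - 1) := by
    have h' : (0:ℝ) ≤ (((k - m : ℤ)):ℝ) * (((k - m - 1 : ℤ)):ℝ) := by
      exact_mod_cast consec_nonneg (k - m)
    push_cast at h'
    nlinarith [h']
  have hcc2 : (0:ℝ) ≤ ((k:ℝ) - (m:ℝ)) * ((k:ℝ) - (m:ℝ) + 1) := by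
    have h' : (0:ℝ) ≤ (((k - m + 1 : ℤ)):ℝ) * (((k - m + 1 - 1 : ℤ)):ℝ) := by
      exact_mod_cast consec_nonneg (k - m + 1)
    push_cast at h'
    nlinarith [h']
  have hkpos : (0:ℝ) < (k:ℝ) := by linarith
  have hmpos : (0:ℝ) < (m:ℝ) := by linarith
  have e1 : 1 / (k:ℝ) - (x - (k:ℝ)) / ((1 + (k:ℝ)) * (k:ℝ))
      = (2*(k:ℝ)+1-x)/((k:ℝ)*((k:ℝ)+1)) := by
    field_simp
    ring
  have e2 : 1 / (m:ℝ) - (x - (m:ℝ)) / ((1 + (m:ℝ)) * (m:ℝ))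
      = (2*(m:ℝ)+1-x)/((m:ℝ)*((m:ℝ)+1)) := by
    field_simp
    ring
  rw [e1, e2, div_le_div_iff₀ (by positivity) (by positivity)]
  nlinarith [mul_nonneg (mul_nonneg (by linarith : (0:ℝ) ≤ (m:ℝ)+1-x) (by linarith : (0:ℝ) ≤ (m:ℝ)+1)) hcc2,
    mul_nonneg (mul_nonneg (by linarith : (0:ℝ) ≤ x-(m:ℝ)) (by linarith : (0:ℝ) ≤ (m:ℝ))) hcc]

/-- The new analytical bound is at least as good as the KAT bound. -/
theorem yat_ge_kat (N : ℕ) (hN : 2 ≤ N) (α γ : Fin N → ℝ)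
    (hαpos : ∀ i, 0 < α i) (hγ1 : ∀ i, α i ≤ γ i) (hγ2 : ∀ i, γ i ≤ (N : ℝ) * α i)
    (δ : ℝ)
    (hδ : δ = max 0 (Finset.univ.sup' (Finset.univ_nonempty_iff.mpr ⟨⟨0, by omega⟩⟩)
        (fun i => γ i - ((N : ℝ) - 1) * α i)))
    (hδα : ∀ i, δ < α i) (hδβ : ∀ i, δ ≤ (γ i - α i) / ((N : ℝ) - 1))
    (α' γ' : Fin N → ℝ)
    (hα' : ∀ i, α' i = α i - δ) (hγ' : ∀ i, γ' i = γ i - (N : ℝ) * δ) :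
    δ + ∑ i : Fin N, (1 / chi (γ' i / α' i) -
        (γ' i / α' i - chi (γ' i / α' i)) /
          ((1 + chi (γ' i / α' i)) * chi (γ' i / α' i))) * α' i ≥
      ∑ i : Fin N, (1 / (⌊γ i / α i⌋ : ℝ) -
        (γ i / α i - (⌊γ i / α i⌋ : ℝ)) /
          ((1 + (⌊γ i / α i⌋ : ℝ)) * (⌊γ i / α i⌋ : ℝ))) * α i := by
  have hδ0 : 0 ≤ δ := hδ ▸ le_max_left _ _
  have hN1 : (1:ℝ) ≤ (N:ℝ) - 1 := by
    have : (2:ℝ) ≤ (N:ℝ) := by exact_mod_cast hN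
    linarith
  have hNpos : (0:ℝ) < (N:ℝ) := by linarith
  have key : ∀ i : Fin N,
      (1 / (⌊γ i / α i⌋ : ℝ) -
        (γ i / α i - (⌊γ i / α i⌋ : ℝ)) /
          ((1 + (⌊γ i / α i⌋ : ℝ)) * (⌊γ i / α i⌋ : ℝ))) * α i - δ / N ≤
      (1 / chi (γ' i / α' i) -
        (γ' i / α' i - chi (γ' i / α' i)) /
          ((1 + chi (γ' i / α' i)) * chi (γ' i / α' i))) * α' i := by
    intro i
    have ha : 0 < α i := hαpos i
    have ha' : 0 < α' i := by rw [hα']; linarith [hδα i]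
    have hga' : α' i ≤ γ' i := by
      rw [hα', hγ']
      have := hδβ i
      rw [le_div_iff₀ (by linarith : (0:ℝ) < (N:ℝ) - 1)] at this
      nlinarith
    -- ratios
    have hr1 : (1:ℝ) ≤ γ i / α i := (one_le_div ha).mpr (hγ1 i)
    have hrN : γ i / α i ≤ (N:ℝ) := by
      rw [div_le_iff₀ ha]; nlinarith [hγ2 i]
    have hr'1 : (1:ℝ) ≤ γ' i / α' i := (one_le_div ha').mpr hga'
    set k : ℤ := ⌊γ i / α i⌋ with hkdef
    have hk1 : 1 ≤ k := by
      rw [hkdef]; exact Int.le_floor.mpr (by exact_mod_cast hr1)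
    have hk1' : (1:ℝ) ≤ (k:ℝ) := by exact_mod_cast hk1
    have hkN : (k:ℝ) ≤ (N:ℝ) := le_trans (Int.floor_le _) hrN
    have hkNZ : k ≤ (N:ℤ) := by exact_mod_cast hkN
    have hm1 : 1 ≤ ⌊γ' i / α' i⌋ := Int.le_floor.mpr (by exact_mod_cast hr'1)
    -- replace chi by floor
    rw [chi_term_eq _ hm1]
    -- subtangent at k
    have hst := subtangent (γ' i / α' i) k hk1 hm1
    have hmul := mul_le_mul_of_nonneg_right hst (le_of_lt ha')
    refine le_trans ?_ hmul
    -- now a linear computation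
    have e1 : (1 / (k:ℝ) - (γ' i / α' i - (k:ℝ)) / ((1 + (k:ℝ)) * (k:ℝ))) * α' i
        = ((2*(k:ℝ)+1) * α' i - γ' i) / ((k:ℝ)*((k:ℝ)+1)) := by
      field_simp
      ring
    have e2 : (1 / (k:ℝ) - (γ i / α i - (k:ℝ)) / ((1 + (k:ℝ)) * (k:ℝ))) * α i
        = ((2*(k:ℝ)+1) * α i - γ i) / ((k:ℝ)*((k:ℝ)+1)) := by
      field_simp
      ring
    rw [e1, e2]
    rw [← sub_nonneg]
    have hNk : (0:ℝ) ≤ ((N:ℝ) - (k:ℝ)) * ((N:ℝ) - (k:ℝ) - 1) := by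
      have h' : (0:ℝ) ≤ ((((N:ℤ) - k : ℤ)):ℝ) * ((((N:ℤ) - k - 1 : ℤ)):ℝ) := by
        exact_mod_cast consec_nonneg ((N:ℤ) - k)
      push_cast at h'
      nlinarith [h']
    have heq : ((2*(k:ℝ)+1) * α' i - γ' i) / ((k:ℝ)*((k:ℝ)+1))
        - (((2*(k:ℝ)+1) * α i - γ i) / ((k:ℝ)*((k:ℝ)+1)) - δ / N)
        = δ * (((N:ℝ) - (k:ℝ)) * ((N:ℝ) - (k:ℝ) - 1)) / ((k:ℝ)*((k:ℝ)+1)*(N:ℝ)) := by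
      rw [hα', hγ']
      field_simp
      ring
    rw [heq]
    positivity
  have hsum := Finset.sum_le_sum (s := Finset.univ) (fun i _ => key i)
  have hconst : ∑ _i : Fin N, δ / (N:ℝ) = δ := by
    rw [Finset.sum_const, Finset.card_univ, Fintype.card_fin, nsmul_eq_mul]
    field_simp
  rw [Finset.sum_sub_distrib, hconst] at hsum
  linarith
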